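/- For every nonnegative integer k, the graph S(k) is chordal. -/

import Mathlib

open SimpleGraph

/-- A graph is chordal if it has no induced cycle of length at least `4`. -/
def IsChordal {V : Type*} (G : SimpleGraph V) : Prop :=
  ∀ n, 4 ≤ n → IsEmpty (cycleGraph n ↪g G)

/-- The graph `S(k)`: a clique `K = {v_0, …, v_k}` (the left summand); for each
`j ∈ {0, …, k-1}` a clique `K^j` on `k + 1 - j` vertices meeting the rest of the graph
exactly in `v_j` (its `k - j` new vertices form the fiber over `j` in the right
summand); and additional edges from `v_j` to all vertices of `K^ℓ` for every
`j ∈ {0, …, k-2}` and `ℓ ∈ {j+1, …, k-1}`. Thus `v_a` is adjacent to the new vertices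
of `K^j` exactly when `a ≤ j`. -/
def Sgraph (k : ℕ) : SimpleGraph (Fin (k + 1) ⊕ Σ j : Fin k, Fin (k - j.val)) where
  Adj x y :=
    match x, y with
    | .inl a, .inl b => a ≠ b
    | .inl a, .inr p => a.val ≤ p.1.val
    | .inr p, .inl a => a.val ≤ p.1.val
    | .inr p, .inr q => p.1 = q.1 ∧ p ≠ q
  symm := by
    constructor
    rintro (a | p) (b | q) h
    · exact Ne.symm h
    · exact h
    · exact h
    · exact ⟨h.1.symm, h.2.symm⟩
  loopless := by
    constructor
    rintro (a | p) h
    · exact h rfl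
    · exact h.2 rfl


open Fin.CommRing Fin.NatCast

section Aux

lemma fin_two_ne_zero (m : ℕ) : (2 : Fin (m + 2 + 2)) ≠ 0 := by
  have : ((2 : ℕ) : Fin (m + 2 + 2)).val = 2 := by
    rw [Fin.val_natCast]; exact Nat.mod_eq_of_lt (by omega)
  intro h
  rw [show (2 : Fin (m+2+2)) = ((2:ℕ) : Fin (m+2+2)) by push_cast; ring] at h
  rw [h] at this
  simp at this

lemma fin_three_ne_zero (m : ℕ) : (3 : Fin (m + 2 + 2)) ≠ 0 := by
  have : ((3 : ℕ) : Fin (m + 2 + 2)).val = 3 := by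
    rw [Fin.val_natCast]; exact Nat.mod_eq_of_lt (by omega)
  intro h
  rw [show (3 : Fin (m+2+2)) = ((3:ℕ) : Fin (m+2+2)) by push_cast; ring] at h
  rw [h] at this
  simp at this

lemma fin_two_ne_one (m : ℕ) : (2 : Fin (m + 2 + 2)) ≠ 1 := by
  intro h
  exact one_ne_zero (α := Fin (m+2+2)) (by linear_combination h)

lemma cg_adj_succ (m : ℕ) (j : Fin (m + 2 + 2)) : (cycleGraph (m + 2 + 2)).Adj j (j + 1) := by
  rw [cycleGraph_adj]
  right; ring

lemma cg_ne_two (m : ℕ) (j : Fin (m + 2 + 2)) : j ≠ j + 2 := by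
  intro h
  apply fin_two_ne_zero m
  have := congrArg (· - j) h
  simpa [sub_self, add_sub_cancel_left] using this.symm

lemma cg_not_adj_two (m : ℕ) (j : Fin (m + 2 + 2)) : ¬ (cycleGraph (m + 2 + 2)).Adj j (j + 2) := by
  rw [cycleGraph_adj]
  rintro (h | h)
  · -- j - (j+2) = 1, so -2 = 1, so 0 = 3
    exact fin_three_ne_zero m (by linear_combination -h)
  · -- (j+2) - j = 1, so 2 = 1
    rw [add_sub_cancel_left] at h
    exact fin_two_ne_one m h

lemma sgraph_mid (k : ℕ) {x z : Fin (k + 1) ⊕ Σ j : Fin k, Fin (k - j.val)}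
    (p : Σ j : Fin k, Fin (k - j.val)) (hxz : x ≠ z)
    (h1 : (Sgraph k).Adj x (.inr p)) (h2 : (Sgraph k).Adj (.inr p) z) :
    (Sgraph k).Adj x z := by
  rcases x with a | q <;> rcases z with b | r
  · exact fun h => hxz (by rw [h])
  · exact le_trans (show a.val ≤ p.1.val from h1) (le_of_eq (congrArg Fin.val (show p.1 = r.1 from h2.1)))
  · exact le_trans (show b.val ≤ p.1.val from h2) (le_of_eq (congrArg Fin.val (show p.1 = q.1 from h1.1.symm)))
  · refine ⟨?_, fun h => hxz (by rw [h])⟩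
    exact (show q.1 = p.1 from h1.1).trans (show p.1 = r.1 from h2.1)

end Aux

/-- For every nonnegative integer `k`, the graph `S(k)` is chordal. -/
theorem Sgraph_chordal (k : ℕ) : IsChordal (Sgraph k) := by
  intro n hn
  obtain ⟨m, rfl⟩ : ∃ m, n = m + 2 + 2 := ⟨n - 4, by omega⟩
  constructor
  intro f
  have hadj : ∀ u v, (Sgraph k).Adj (f u) (f v) ↔ (cycleGraph (m+2+2)).Adj u v :=
    fun u v => f.map_adj_iff
  have hinj := f.injective
  have claim : ∀ j : Fin (m+2+2), ∃ a, f j = Sum.inl a := by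
    intro j
    cases h : f j with
    | inl a => exact ⟨a, rfl⟩
    | inr p =>
      exfalso
      have e1 : (j - 1) + 1 = j := by ring
      have e2 : (j - 1) + 2 = j + 1 := by ring
      have a1 : (Sgraph k).Adj (f (j-1)) (f j) := by
        rw [hadj]; have := cg_adj_succ m (j-1); rwa [e1] at this
      have a2 : (Sgraph k).Adj (f j) (f (j+1)) := by
        rw [hadj]; exact cg_adj_succ m j
      have hne : f (j-1) ≠ f (j+1) := by
        intro he
        have := hinj he
        rw [← e2] at this
        exact cg_ne_two m (j-1) this
      have := sgraph_mid k p hne (h ▸ a1) (h ▸ a2)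
      rw [hadj] at this
      rw [← e2] at this
      exact cg_not_adj_two m (j-1) this
  obtain ⟨a, ha⟩ := claim 0
  obtain ⟨b, hb⟩ := claim 2
  have hne : f 0 ≠ f 2 := by
    intro he
    have := hinj he
    rw [show (2 : Fin (m+2+2)) = 0 + 2 by ring] at this
    exact cg_ne_two m 0 this
  have : (Sgraph k).Adj (f 0) (f 2) := by
    rw [ha, hb]
    exact fun h => hne (by rw [ha, hb, h])
  rw [hadj] at this
  rw [show (2 : Fin (m+2+2)) = 0 + 2 by ring] at this
  exact cg_not_adj_two m 0 this
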